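/- Every k_ω-space is normal. -/

import Mathlib

open Set Topology

def IsKOmegaStructure {X : Type*} [TopologicalSpace X] (K : ℕ → Set X) : Prop :=
  (∀ n, IsCompact (K n)) ∧ (⋃ n, K n) = Set.univ ∧
    ∀ F : Set X, IsClosed F ↔ ∀ n, IsClosed (((↑) : K n → X) ⁻¹' F)

def IsCompactCoverMap {X Y : Type*} [TopologicalSpace X] [TopologicalSpace Y]
    (f : X → Y) : Prop :=
  Continuous f ∧ Function.Surjective f ∧
    ∀ C : Set Y, IsCompact C → ∃ K : Set X, IsCompact K ∧ f '' K = C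

/-- Separation lemma inside a compact closed set `c`: two disjoint closed subsets of `c`
can be surrounded by relatively open subsets of `c` with disjoint closures. -/
theorem komega_sep {X : Type*} [TopologicalSpace X] [T2Space X]
    {c : Set X} (hc : IsCompact c) {S T : Set X} (hSc : S ⊆ c) (hTc : T ⊆ c)
    (hS : IsClosed S) (hT : IsClosed T) (hd : S ∩ T = ∅) :
    ∃ U V : Set X, S ⊆ U ∧ T ⊆ V ∧ U ⊆ c ∧ V ⊆ c ∧
      (∃ W, IsOpen W ∧ U = W ∩ c) ∧ (∃ W, IsOpen W ∧ V = W ∩ c) ∧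
      closure U ∩ closure V = ∅ := by
  have hccl : IsClosed c := hc.isClosed
  haveI : CompactSpace c := isCompact_iff_compactSpace.mp hc
  haveI : NormalSpace c := inferInstance
  set s : Set c := ((↑) : c → X) ⁻¹' S with hs_def
  set t : Set c := ((↑) : c → X) ⁻¹' T with ht_def
  have hs : IsClosed s := hS.preimage continuous_subtype_val
  have ht : IsClosed t := hT.preimage continuous_subtype_val
  have hst : Disjoint s t := by
    rw [Set.disjoint_iff_inter_eq_empty]
    ext x
    simp only [Set.mem_inter_iff, Set.mem_preimage, Set.mem_empty_iff_false, iff_false]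
    intro ⟨h1, h2⟩
    have : (x : X) ∈ S ∩ T := ⟨h1, h2⟩
    rw [hd] at this; exact this
  obtain ⟨u, v, hu, hv, hsu, htv, huv⟩ := NormalSpace.normal s t hs ht hst
  obtain ⟨u', hu', hsu', huu'⟩ := normal_exists_closure_subset hs hu hsu
  obtain ⟨v', hv', htv', hvv'⟩ := normal_exists_closure_subset ht hv htv
  have hemb := hccl.isClosedEmbedding_subtypeVal
  refine ⟨(↑) '' u', (↑) '' v', ?_, ?_, ?_, ?_, ?_, ?_, ?_⟩
  · intro x hx
    exact ⟨⟨x, hSc hx⟩, hsu' hx, rfl⟩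
  · intro x hx
    exact ⟨⟨x, hTc hx⟩, htv' hx, rfl⟩
  · rintro x ⟨y, -, rfl⟩; exact y.2
  · rintro x ⟨y, -, rfl⟩; exact y.2
  · obtain ⟨W, hW, hWe⟩ := isOpen_induced_iff.mp hu'
    exact ⟨W, hW, by rw [← hWe, Subtype.image_preimage_coe, Set.inter_comm]⟩
  · obtain ⟨W, hW, hWe⟩ := isOpen_induced_iff.mp hv'
    exact ⟨W, hW, by rw [← hWe, Subtype.image_preimage_coe, Set.inter_comm]⟩
  · rw [hemb.closure_image_eq, hemb.closure_image_eq]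
    ext x
    simp only [Set.mem_inter_iff, Set.mem_image, Set.mem_empty_iff_false, iff_false]
    rintro ⟨⟨y, hy, rfl⟩, ⟨z, hz, hze⟩⟩
    have : z = y := Subtype.val_injective hze
    subst this
    exact (Set.disjoint_left.mp huv (huu' hy)) (hvv' hz)

theorem stmt9 {X : Type*} [TopologicalSpace X] [T2Space X]
    (h : ∃ K : ℕ → Set X, IsKOmegaStructure K) : NormalSpace X := by
  obtain ⟨K, hKcpt, hKcov, hKcl⟩ := h
  set c : ℕ → Set X := Set.accumulate K with hc_def
  have hccpt : ∀ n, IsCompact (c n) := isCompact_accumulate hKcpt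
  have hccl : ∀ n, IsClosed (c n) := fun n => (hccpt n).isClosed
  have hcmono : Monotone c := monotone_accumulate
  have hccov : (⋃ n, c n) = Set.univ := by
    rw [hc_def, Set.iUnion_accumulate]; exact hKcov
  have hKc : ∀ n, K n ⊆ c n := fun n => Set.subset_accumulate
  constructor
  intro A B hA hB hAB
  -- the invariant of the construction
  set P : ℕ → Set X → Set X → Prop := fun n U V =>
    U ⊆ c n ∧ V ⊆ c n ∧
    (∃ W, IsOpen W ∧ U = W ∩ c n) ∧ (∃ W, IsOpen W ∧ V = W ∩ c n) ∧
    A ∩ c n ⊆ U ∧ B ∩ c n ⊆ V ∧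
    closure U ∩ closure V = ∅ ∧ closure U ∩ B = ∅ ∧ closure V ∩ A = ∅ with hP_def
  have hABempty : A ∩ B = ∅ := Set.disjoint_iff_inter_eq_empty.mp hAB
  -- basic separation at each level
  have base : ∀ n, ∃ U V : Set X, P n U V := by
    intro n
    have hd : (A ∩ c n) ∩ (B ∩ c n) = ∅ := by
      rw [Set.eq_empty_iff_forall_notMem]
      rintro x ⟨⟨h1, -⟩, ⟨h2, -⟩⟩
      exact Set.eq_empty_iff_forall_notMem.mp hABempty x ⟨h1, h2⟩
    obtain ⟨U, V, hSU, hTV, hUc, hVc, hUo, hVo, hUV⟩ :=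
      komega_sep (hccpt n) Set.inter_subset_right Set.inter_subset_right
        (hA.inter (hccl n)) (hB.inter (hccl n)) hd
    have hclU : closure U ⊆ c n := (hccl n).closure_subset_iff.mpr hUc
    have hclV : closure V ⊆ c n := (hccl n).closure_subset_iff.mpr hVc
    refine ⟨U, V, hUc, hVc, hUo, hVo, hSU, hTV, hUV, ?_, ?_⟩
    · rw [Set.eq_empty_iff_forall_notMem]
      rintro x ⟨hx1, hx2⟩
      have hxV : x ∈ V := hTV ⟨hx2, hclU hx1⟩
      exact Set.eq_empty_iff_forall_notMem.mp hUV x ⟨hx1, subset_closure hxV⟩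
    · rw [Set.eq_empty_iff_forall_notMem]
      rintro x ⟨hx1, hx2⟩
      have hxU : x ∈ U := hSU ⟨hx2, hclV hx1⟩
      exact Set.eq_empty_iff_forall_notMem.mp hUV x ⟨subset_closure hxU, hx1⟩
  -- inductive step
  have step : ∀ n (p : Set X × Set X), ∃ q : Set X × Set X,
      P (n + 1) q.1 q.2 ∧ (P n p.1 p.2 → closure p.1 ⊆ q.1 ∧ closure p.2 ⊆ q.2) := by
    intro n ⟨U, V⟩
    by_cases hP : P n U V
    · obtain ⟨hUc, hVc, -, -, hAU, hBV, hUV, hUB, hVA⟩ := hP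
      have hclU : closure U ⊆ c n := (hccl n).closure_subset_iff.mpr hUc
      have hclV : closure V ⊆ c n := (hccl n).closure_subset_iff.mpr hVc
      set S : Set X := (A ∩ c (n + 1)) ∪ closure U with hS_def
      set T : Set X := (B ∩ c (n + 1)) ∪ closure V with hT_def
      have hSc : S ⊆ c (n + 1) :=
        Set.union_subset Set.inter_subset_right
          (hclU.trans (hcmono (Nat.le_succ n)))
      have hTc : T ⊆ c (n + 1) :=
        Set.union_subset Set.inter_subset_right
          (hclV.trans (hcmono (Nat.le_succ n)))
      have hScl : IsClosed S := (hA.inter (hccl (n + 1))).union isClosed_closure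
      have hTcl : IsClosed T := (hB.inter (hccl (n + 1))).union isClosed_closure
      have hd : S ∩ T = ∅ := by
        rw [Set.eq_empty_iff_forall_notMem]
        rintro x ⟨hx1 | hx1, hx2 | hx2⟩
        · exact Set.eq_empty_iff_forall_notMem.mp hABempty x ⟨hx1.1, hx2.1⟩
        · exact Set.eq_empty_iff_forall_notMem.mp hVA x ⟨hx2, hx1.1⟩
        · exact Set.eq_empty_iff_forall_notMem.mp hUB x ⟨hx1, hx2.1⟩
        · exact Set.eq_empty_iff_forall_notMem.mp hUV x ⟨hx1, hx2⟩
      obtain ⟨U', V', hSU, hTV, hUc', hVc', hUo', hVo', hUV'⟩ :=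
        komega_sep (hccpt (n + 1)) hSc hTc hScl hTcl hd
      have hclU' : closure U' ⊆ c (n + 1) := (hccl (n + 1)).closure_subset_iff.mpr hUc'
      have hclV' : closure V' ⊆ c (n + 1) := (hccl (n + 1)).closure_subset_iff.mpr hVc'
      refine ⟨⟨U', V'⟩, ⟨hUc', hVc', hUo', hVo',
        fun x hx => hSU (Set.mem_union_left _ hx),
        fun x hx => hTV (Set.mem_union_left _ hx), hUV', ?_, ?_⟩,
        fun _ => ⟨fun x hx => hSU (Set.mem_union_right _ hx),
                  fun x hx => hTV (Set.mem_union_right _ hx)⟩⟩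
      · rw [Set.eq_empty_iff_forall_notMem]
        rintro x ⟨hx1, hx2⟩
        have hxV : x ∈ V' := hTV (Set.mem_union_left _ ⟨hx2, hclU' hx1⟩)
        exact Set.eq_empty_iff_forall_notMem.mp hUV' x ⟨hx1, subset_closure hxV⟩
      · rw [Set.eq_empty_iff_forall_notMem]
        rintro x ⟨hx1, hx2⟩
        have hxU : x ∈ U' := hSU (Set.mem_union_left _ ⟨hx2, hclV' hx1⟩)
        exact Set.eq_empty_iff_forall_notMem.mp hUV' x ⟨subset_closure hxU, hx1⟩
    · obtain ⟨U', V', hP'⟩ := base (n + 1)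
      exact ⟨⟨U', V'⟩, hP', fun hc => absurd hc hP⟩
  choose f hf1 hf2 using step
  obtain ⟨U0, V0, hP0⟩ := base 0
  set g : ℕ → Set X × Set X := fun n => Nat.rec (U0, V0) (fun n ih => f n ih) n with hg_def
  have hg : ∀ n, P n (g n).1 (g n).2 := by
    intro n
    cases n with
    | zero => exact hP0
    | succ m => exact hf1 m (g m)
  have hgstep : ∀ n, closure (g n).1 ⊆ (g (n + 1)).1 ∧ closure (g n).2 ⊆ (g (n + 1)).2 :=
    fun n => hf2 n (g n) (hg n)
  set u : ℕ → Set X := fun n => (g n).1 with hu_def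
  set v : ℕ → Set X := fun n => (g n).2 with hv_def
  have humono : Monotone u :=
    monotone_nat_of_le_succ fun n => (subset_closure.trans (hgstep n).1)
  have hvmono : Monotone v :=
    monotone_nat_of_le_succ fun n => (subset_closure.trans (hgstep n).2)
  -- the final open sets
  set Uo : Set X := ⋃ n, u n with hUo_def
  set Vo : Set X := ⋃ n, v n with hVo_def
  -- openness of such unions
  have key : ∀ (w : ℕ → Set X), Monotone w → (∀ n, ∃ W, IsOpen W ∧ w n = W ∩ c n) →
      IsOpen (⋃ n, w n) := by
    intro w hwmono hwo
    choose W hWo hWe using hwo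
    rw [← isClosed_compl_iff, hKcl]
    intro n
    have h1 : (⋃ m, w m) ∩ c n = (⋃ m, ⋃ (_ : n ≤ m), W m) ∩ c n := by
      ext x
      simp only [Set.mem_inter_iff, Set.mem_iUnion]
      constructor
      · rintro ⟨⟨m, hm⟩, hxc⟩
        refine ⟨⟨max m n, le_max_right m n, ?_⟩, hxc⟩
        have : x ∈ w (max m n) := hwmono (le_max_left m n) hm
        rw [hWe] at this
        exact this.1
      · rintro ⟨⟨m, hnm, hxW⟩, hxc⟩
        refine ⟨⟨m, ?_⟩, hxc⟩
        rw [hWe]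
        exact ⟨hxW, hcmono hnm hxc⟩
    have hW : IsOpen (⋃ m, ⋃ (_ : n ≤ m), W m) :=
      isOpen_iUnion fun m => isOpen_iUnion fun _ => hWo m
    have h2 : IsClosed ((⋃ m, w m)ᶜ ∩ c n) := by
      have : (⋃ m, w m)ᶜ ∩ c n = (⋃ m, ⋃ (_ : n ≤ m), W m)ᶜ ∩ c n := by
        ext x
        simp only [Set.mem_inter_iff, Set.mem_compl_iff]
        constructor
        · rintro ⟨hx1, hx2⟩
          refine ⟨fun hx => hx1 ?_, hx2⟩
          have : x ∈ (⋃ m, ⋃ (_ : n ≤ m), W m) ∩ c n := ⟨hx, hx2⟩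
          rw [← h1] at this
          exact this.1
        · rintro ⟨hx1, hx2⟩
          refine ⟨fun hx => hx1 ?_, hx2⟩
          have : x ∈ (⋃ m, w m) ∩ c n := ⟨hx, hx2⟩
          rw [h1] at this
          exact this.1
      rw [this]
      exact hW.isClosed_compl.inter (hccl n)
    have h3 : (((↑) : K n → X) ⁻¹' (⋃ m, w m)ᶜ) =
        ((↑) : K n → X) ⁻¹' ((⋃ m, w m)ᶜ ∩ c n) := by
      ext x
      simp only [Set.mem_preimage, Set.mem_inter_iff]
      exact ⟨fun h => ⟨h, hKc n x.2⟩, fun h => h.1⟩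
    rw [h3]
    exact h2.preimage continuous_subtype_val
  have hUoopen : IsOpen Uo := key u humono fun n => (hg n).2.2.1
  have hVoopen : IsOpen Vo := key v hvmono fun n => (hg n).2.2.2.1
  refine ⟨Uo, Vo, hUoopen, hVoopen, ?_, ?_, ?_⟩
  · intro x hx
    have : x ∈ ⋃ n, c n := hccov ▸ Set.mem_univ x
    obtain ⟨n, hn⟩ := Set.mem_iUnion.mp this
    exact Set.mem_iUnion.mpr ⟨n, (hg n).2.2.2.2.1 ⟨hx, hn⟩⟩
  · intro x hx
    have : x ∈ ⋃ n, c n := hccov ▸ Set.mem_univ x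
    obtain ⟨n, hn⟩ := Set.mem_iUnion.mp this
    exact Set.mem_iUnion.mpr ⟨n, (hg n).2.2.2.2.2.1 ⟨hx, hn⟩⟩
  · rw [Set.disjoint_iff_inter_eq_empty, Set.eq_empty_iff_forall_notMem]
    rintro x ⟨hx1, hx2⟩
    obtain ⟨n, hn⟩ := Set.mem_iUnion.mp hx1
    obtain ⟨m, hm⟩ := Set.mem_iUnion.mp hx2
    have hn' : x ∈ u (max n m) := humono (le_max_left n m) hn
    have hm' : x ∈ v (max n m) := hvmono (le_max_right n m) hm
    exact Set.eq_empty_iff_forall_notMem.mp (hg (max n m)).2.2.2.2.2.2.1 x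
      ⟨subset_closure hn', subset_closure hm'⟩
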